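/- arXiv:2308.04690 — 3 statements merged into one kernel-verified Lean document; each statement's English description precedes it below -/
import Mathlib

section
/- Let (Ω, μ) be a measure space, let A be a real symmetric invertible N×N matrix with ρ_min = min_i |λ_i| and ρ_max = max_i |λ_i| (λ_i the eigenvalues of A), and let F, α*, β, γ : Ω → ℝ^N be measurable functions such that A α*(ω) = F(ω) for μ-a.e. ω, the functions ω ↦ ‖α*(ω) − β(ω)‖² and ω ↦ ‖γ(ω) − α*(ω)‖² are μ-integrable, and ∫_Ω ‖Aβ(ω) − F(ω)‖² dμ(ω) ≤ ∫_Ω ‖Aγ(ω) − F(ω)‖² dμ(ω). Then ∫_Ω ‖α*(ω) − β(ω)‖² dμ(ω) ≤ 4 (ρ_max/ρ_min)² ∫_Ω ‖γ(ω) − α*(ω)‖² dμ(ω). (This is the quasi-optimality estimate underlying the approximation-error bound for the residual-minimizing coefficient map: the squared L²(Ω) distance from any residual-loss minimizer β to the exact coefficient map α* is bounded by 4(ρ_max/ρ_min)² times the squared L²(Ω) distance from α* of any competitor γ.) -/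
open MeasureTheory Matrix

/-- Euclidean norm of a vector in `ℝ^N`. -/
noncomputable def euclNorm {N : ℕ} (v : Fin N → ℝ) : ℝ :=
  ‖(EuclideanSpace.equiv (Fin N) ℝ).symm v‖

lemma euclNorm_nonneg {N : ℕ} (v : Fin N → ℝ) : 0 ≤ euclNorm v := norm_nonneg _

lemma continuous_euclNorm {N : ℕ} : Continuous (euclNorm (N := N)) :=
  (continuous_norm).comp (EuclideanSpace.equiv (Fin N) ℝ).symm.continuous

/-- Coefficient of `A *ᵥ v` in the eigenbasis. -/
lemma repr_mulVec {N : ℕ} (A : Matrix (Fin N) (Fin N) ℝ) (hA : A.IsHermitian) (i : Fin N)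
    (v : EuclideanSpace ℝ (Fin N)) :
    hA.eigenvectorBasis.repr ((EuclideanSpace.equiv (Fin N) ℝ).symm (A.mulVec v)) i
      = hA.eigenvalues i * hA.eigenvectorBasis.repr v i := by
  rw [OrthonormalBasis.repr_apply_apply, OrthonormalBasis.repr_apply_apply]
  have h1 : ∀ x y : EuclideanSpace ℝ (Fin N),
      (inner ℝ x y : ℝ) = dotProduct (fun j => x j) (fun j => y j) := by
    intro x y; simp [PiLp.inner_apply, dotProduct, mul_comm]
  rw [h1, h1]
  have hsym : Aᵀ = A := by
    have := hA.eq; rwa [Matrix.conjTranspose_eq_transpose_of_trivial] at this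
  have h2 : (fun j => ((EuclideanSpace.equiv (Fin N) ℝ).symm (A.mulVec v)) j)
      = A.mulVec (fun j => v j) := rfl
  rw [h2]
  have hvm : ∀ x : Fin N → ℝ, x ᵥ* A = A *ᵥ x := by
    intro x; rw [← hsym, Matrix.vecMul_transpose, hsym]
  rw [dotProduct_mulVec, hvm]
  have h3 : A.mulVec (fun j => hA.eigenvectorBasis i j)
      = fun j => hA.eigenvalues i * hA.eigenvectorBasis i j := by
    have := hA.mulVec_eigenvectorBasis i
    funext j
    have hj := congrFun this j
    simpa using hj
  rw [h3]
  simp [dotProduct, Finset.mul_sum, mul_assoc]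

/-- Parseval in the eigenbasis. -/
lemma euclNorm_sq_eq_sum {N : ℕ} (A : Matrix (Fin N) (Fin N) ℝ) (hA : A.IsHermitian)
    (w : EuclideanSpace ℝ (Fin N)) :
    ‖w‖ ^ 2 = ∑ i, (hA.eigenvectorBasis.repr w i) ^ 2 := by
  rw [← hA.eigenvectorBasis.repr.norm_map w, EuclideanSpace.norm_eq,
    Real.sq_sqrt (by positivity)]
  simp [sq_abs]

lemma spec_bounds {N : ℕ} (A : Matrix (Fin N) (Fin N) ℝ) (hA : A.IsHermitian)
    (ρmin ρmax : ℝ)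
    (hρmin : IsLeast {r : ℝ | ∃ i : Fin N, r = |hA.eigenvalues i|} ρmin)
    (hρmax : IsGreatest {r : ℝ | ∃ i : Fin N, r = |hA.eigenvalues i|} ρmax)
    (v : Fin N → ℝ) :
    ρmin ^ 2 * euclNorm v ^ 2 ≤ euclNorm (A.mulVec v) ^ 2 ∧
      euclNorm (A.mulVec v) ^ 2 ≤ ρmax ^ 2 * euclNorm v ^ 2 := by
  have hρmin0 : 0 ≤ ρmin := by obtain ⟨i, hi⟩ := hρmin.1; rw [hi]; exact abs_nonneg _
  set w : EuclideanSpace ℝ (Fin N) := (EuclideanSpace.equiv (Fin N) ℝ).symm v with hw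
  have h1 : euclNorm v ^ 2 = ∑ i, (hA.eigenvectorBasis.repr w i) ^ 2 :=
    euclNorm_sq_eq_sum A hA w
  have h2 : euclNorm (A.mulVec v) ^ 2
      = ∑ i, (hA.eigenvalues i) ^ 2 * (hA.eigenvectorBasis.repr w i) ^ 2 := by
    have := euclNorm_sq_eq_sum A hA ((EuclideanSpace.equiv (Fin N) ℝ).symm (A.mulVec v))
    rw [euclNorm, this]
    congr 1; funext i
    have hv : A.mulVec v = A.mulVec w := rfl
    rw [hv, repr_mulVec A hA i w, mul_pow]
  constructor
  · rw [h1, h2, Finset.mul_sum]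
    apply Finset.sum_le_sum
    intro i _
    have hle : ρmin ≤ |hA.eigenvalues i| := hρmin.2 ⟨i, rfl⟩
    have : ρmin ^ 2 ≤ (hA.eigenvalues i) ^ 2 := by
      rw [← sq_abs (hA.eigenvalues i)]
      exact pow_le_pow_left₀ hρmin0 hle 2
    exact mul_le_mul_of_nonneg_right this (sq_nonneg _)
  · rw [h1, h2, Finset.mul_sum]
    apply Finset.sum_le_sum
    intro i _
    have hle : |hA.eigenvalues i| ≤ ρmax := hρmax.2 ⟨i, rfl⟩
    have : (hA.eigenvalues i) ^ 2 ≤ ρmax ^ 2 := by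
      rw [← sq_abs (hA.eigenvalues i)]
      exact pow_le_pow_left₀ (abs_nonneg _) hle 2
    exact mul_le_mul_of_nonneg_right this (sq_nonneg _)

lemma measurable_euclNorm_sq_mulVec {N : ℕ} (A : Matrix (Fin N) (Fin N) ℝ)
    {Ω : Type*} [MeasurableSpace Ω] {f : Ω → Fin N → ℝ} (hf : Measurable f) :
    Measurable (fun ω => euclNorm (A.mulVec (f ω)) ^ 2) := by
  have h1 : Measurable (fun ω => A.mulVec (f ω)) := by
    apply measurable_pi_lambda
    intro i
    simp only [Matrix.mulVec, dotProduct]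
    exact Finset.measurable_sum _ fun j _ => (measurable_const.mul ((measurable_pi_apply j).comp hf))
  exact ((continuous_euclNorm.measurable.comp h1).pow_const 2)

/-- (Quasi-optimality estimate for the residual-minimizing coefficient
map.)  Let `(Ω, μ)` be a measure space, `A` a real symmetric (= Hermitian over `ℝ`)
invertible `N×N` matrix with `ρ_min = min_i |λ_i|`, `ρ_max = max_i |λ_i|`, and let
`F, α*, β, γ : Ω → ℝ^N` be measurable, with `A α*(ω) = F(ω)` μ-a.e., the functions
`ω ↦ ‖α*(ω) − β(ω)‖²` and `ω ↦ ‖γ(ω) − α*(ω)‖²` μ-integrable, and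
`∫ ‖Aβ − F‖² dμ ≤ ∫ ‖Aγ − F‖² dμ`.  Then
`∫ ‖α* − β‖² dμ ≤ 4 (ρ_max/ρ_min)² ∫ ‖γ − α*‖² dμ`. -/
theorem quasi_optimality
    {N : ℕ} (hN : 0 < N) (A : Matrix (Fin N) (Fin N) ℝ)
    (hA : A.IsHermitian) (hinv : IsUnit A)
    (ρmin ρmax : ℝ)
    (hρmin : IsLeast {r : ℝ | ∃ i : Fin N, r = |hA.eigenvalues i|} ρmin)
    (hρmax : IsGreatest {r : ℝ | ∃ i : Fin N, r = |hA.eigenvalues i|} ρmax)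
    {Ω : Type*} [MeasurableSpace Ω] (μ : Measure Ω)
    (F αstar β γ : Ω → Fin N → ℝ)
    (hFmeas : Measurable F) (hαmeas : Measurable αstar)
    (hβmeas : Measurable β) (hγmeas : Measurable γ)
    (hsol : ∀ᵐ ω ∂μ, A.mulVec (αstar ω) = F ω)
    (hint₁ : Integrable (fun ω => (euclNorm (αstar ω - β ω)) ^ 2) μ)
    (hint₂ : Integrable (fun ω => (euclNorm (γ ω - αstar ω)) ^ 2) μ)
    (hmin : (∫ ω, (euclNorm (A.mulVec (β ω) - F ω)) ^ 2 ∂μ)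
        ≤ ∫ ω, (euclNorm (A.mulVec (γ ω) - F ω)) ^ 2 ∂μ) :
    (∫ ω, (euclNorm (αstar ω - β ω)) ^ 2 ∂μ)
      ≤ 4 * (ρmax / ρmin) ^ 2 * ∫ ω, (euclNorm (γ ω - αstar ω)) ^ 2 ∂μ := by
  -- ρmin is positive
  have hdet : A.det ≠ 0 := by
    intro h
    exact (Matrix.isUnit_iff_isUnit_det A).mp hinv |>.ne_zero h
  have hρmin_pos : 0 < ρmin := by
    obtain ⟨i, hi⟩ := hρmin.1
    rw [hi, abs_pos]
    intro h0
    apply hdet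
    have := hA.det_eq_prod_eigenvalues
    rw [this]
    exact Finset.prod_eq_zero (Finset.mem_univ i) (by exact_mod_cast h0)
  have hρmax_nonneg : 0 ≤ ρmax := le_trans hρmin_pos.le (hρmax.2 hρmin.1)
  -- integrability of the residual-type integrands
  have hαβmeas : Measurable (fun ω => αstar ω - β ω) := hαmeas.sub hβmeas
  have hγαmeas : Measurable (fun ω => γ ω - αstar ω) := hγmeas.sub hαmeas
  have hintA₁ : Integrable (fun ω => euclNorm (A.mulVec (αstar ω - β ω)) ^ 2) μ := by
    apply Integrable.mono' (hint₁.const_mul (ρmax ^ 2))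
      (measurable_euclNorm_sq_mulVec A hαβmeas).aestronglyMeasurable
    filter_upwards with ω
    rw [Real.norm_eq_abs, abs_of_nonneg (by positivity)]
    exact (spec_bounds A hA ρmin ρmax hρmin hρmax _).2
  have hintA₂ : Integrable (fun ω => euclNorm (A.mulVec (γ ω - αstar ω)) ^ 2) μ := by
    apply Integrable.mono' (hint₂.const_mul (ρmax ^ 2))
      (measurable_euclNorm_sq_mulVec A hγαmeas).aestronglyMeasurable
    filter_upwards with ω
    rw [Real.norm_eq_abs, abs_of_nonneg (by positivity)]
    exact (spec_bounds A hA ρmin ρmax hρmin hρmax _).2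
  -- a.e. identification of residuals
  have hae₁ : (fun ω => euclNorm (A.mulVec (β ω) - F ω) ^ 2)
      =ᵐ[μ] (fun ω => euclNorm (A.mulVec (αstar ω - β ω)) ^ 2) := by
    filter_upwards [hsol] with ω hω
    have : A.mulVec (αstar ω - β ω) = -(A.mulVec (β ω) - F ω) := by
      rw [Matrix.mulVec_sub, hω]; ring_nf
    rw [this]
    have hn : euclNorm (-(A.mulVec (β ω) - F ω)) = euclNorm (A.mulVec (β ω) - F ω) := by
      simp only [euclNorm]
      rw [map_neg, norm_neg]
    rw [hn]
  have hae₂ : (fun ω => euclNorm (A.mulVec (γ ω) - F ω) ^ 2)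
      =ᵐ[μ] (fun ω => euclNorm (A.mulVec (γ ω - αstar ω)) ^ 2) := by
    filter_upwards [hsol] with ω hω
    have : A.mulVec (γ ω - αstar ω) = A.mulVec (γ ω) - F ω := by
      rw [Matrix.mulVec_sub, hω]
    rw [this]
  -- chain of inequalities
  have step1 : ρmin ^ 2 * ∫ ω, euclNorm (αstar ω - β ω) ^ 2 ∂μ
      ≤ ∫ ω, euclNorm (A.mulVec (αstar ω - β ω)) ^ 2 ∂μ := by
    rw [← integral_const_mul]
    apply integral_mono (hint₁.const_mul _) hintA₁
    intro ω
    exact (spec_bounds A hA ρmin ρmax hρmin hρmax _).1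
  have step2 : ∫ ω, euclNorm (A.mulVec (γ ω - αstar ω)) ^ 2 ∂μ
      ≤ ρmax ^ 2 * ∫ ω, euclNorm (γ ω - αstar ω) ^ 2 ∂μ := by
    rw [← integral_const_mul]
    apply integral_mono hintA₂ (hint₂.const_mul _)
    intro ω
    exact (spec_bounds A hA ρmin ρmax hρmin hρmax _).2
  have hkey : ρmin ^ 2 * ∫ ω, euclNorm (αstar ω - β ω) ^ 2 ∂μ
      ≤ ρmax ^ 2 * ∫ ω, euclNorm (γ ω - αstar ω) ^ 2 ∂μ := by
    calc ρmin ^ 2 * ∫ ω, euclNorm (αstar ω - β ω) ^ 2 ∂μ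
        ≤ ∫ ω, euclNorm (A.mulVec (αstar ω - β ω)) ^ 2 ∂μ := step1
      _ = ∫ ω, euclNorm (A.mulVec (β ω) - F ω) ^ 2 ∂μ := (integral_congr_ae hae₁).symm
      _ ≤ ∫ ω, euclNorm (A.mulVec (γ ω) - F ω) ^ 2 ∂μ := hmin
      _ = ∫ ω, euclNorm (A.mulVec (γ ω - αstar ω)) ^ 2 ∂μ := integral_congr_ae hae₂
      _ ≤ ρmax ^ 2 * ∫ ω, euclNorm (γ ω - αstar ω) ^ 2 ∂μ := step2
  have hI₂ : 0 ≤ ∫ ω, euclNorm (γ ω - αstar ω) ^ 2 ∂μ :=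
    integral_nonneg fun ω => sq_nonneg _
  have h1 : ∫ ω, euclNorm (αstar ω - β ω) ^ 2 ∂μ
      ≤ (ρmax / ρmin) ^ 2 * ∫ ω, euclNorm (γ ω - αstar ω) ^ 2 ∂μ := by
    rw [div_pow]
    rw [div_mul_eq_mul_div, le_div_iff₀ (by positivity)]
    linarith [hkey]
  calc ∫ ω, euclNorm (αstar ω - β ω) ^ 2 ∂μ
      ≤ (ρmax / ρmin) ^ 2 * ∫ ω, euclNorm (γ ω - αstar ω) ^ 2 ∂μ := h1
    _ ≤ 4 * (ρmax / ρmin) ^ 2 * ∫ ω, euclNorm (γ ω - αstar ω) ^ 2 ∂μ := by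
        nlinarith [sq_nonneg (ρmax / ρmin), hI₂, mul_nonneg (sq_nonneg (ρmax / ρmin)) hI₂]
end

section
/- Let f : [0,1] → ℝ be continuously differentiable. Define u⁰(x) = ∫_x^1 f(s) ds and, for ε > 0, the corrector φ_ε(x) = −u⁰(0) · e^{−x/ε}. Then there exists a constant κ > 0, depending only on f and not on ε, such that for every ε ∈ (0, 1] and every function u : [0,1] → ℝ that is twice continuously differentiable on [0,1] and satisfies −ε u''(x) − u'(x) = f(x) for all x ∈ (0,1) together with u(0) = u(1) = 0, one has the L² error bound ∫_0^1 (u(x) − u⁰(x) − φ_ε(x))² dx ≤ κ² ε². -/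
open Set intervalIntegral

lemma corrector_max_principle (ε : ℝ) (hε : 0 < ε) (z z' z'' : ℝ → ℝ)
    (hc : ContinuousOn z (Icc 0 1))
    (hz' : ∀ x ∈ Ioo (0:ℝ) 1, HasDerivAt z (z' x) x)
    (hz'' : ∀ x ∈ Ioo (0:ℝ) 1, HasDerivAt z' (z'' x) x)
    (hz'c : ContinuousOn z' (Ioo 0 1))
    (hL : ∀ x ∈ Ioo (0:ℝ) 1, 0 < -ε * z'' x - z' x)
    (h0 : 0 ≤ z 0) (h1 : 0 ≤ z 1) :
    ∀ x ∈ Icc (0:ℝ) 1, 0 ≤ z x := by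
  obtain ⟨x0, hx0, hmin⟩ := isCompact_Icc.exists_isMinOn (nonempty_Icc.2 zero_le_one) hc
  intro x hx
  have hge : z x0 ≤ z x := hmin hx
  rcases eq_or_lt_of_le hx0.1 with h0eq | h0lt
  · calc (0:ℝ) ≤ z 0 := h0
      _ = z x0 := by rw [h0eq]
      _ ≤ z x := hge
  rcases eq_or_lt_of_le hx0.2 with h1eq | h1lt
  · calc (0:ℝ) ≤ z 1 := h1
      _ = z x0 := by rw [h1eq]
      _ ≤ z x := hge
  exfalso
  have hx0i : x0 ∈ Ioo (0:ℝ) 1 := ⟨h0lt, h1lt⟩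
  have hloc : IsLocalMin z x0 := hmin.isLocalMin (Icc_mem_nhds h0lt h1lt)
  have hz'x0 : z' x0 = 0 := by
    rw [← (hz' x0 hx0i).deriv]; exact hloc.deriv_eq_zero
  -- z' is negative on (x0, 1)
  have hneg : ∀ y ∈ Ioo x0 1, z' y < 0 := by
    intro y hy
    have hsub : Icc x0 y ⊆ Ioo (0:ℝ) 1 :=
      fun t ht => ⟨lt_of_lt_of_le h0lt ht.1, lt_of_le_of_lt ht.2 hy.2⟩
    have hganti : StrictAntiOn (fun t => Real.exp (t / ε) * z' t) (Icc x0 y) := by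
      apply strictAntiOn_of_deriv_neg (convex_Icc _ _)
      · exact ((Real.continuous_exp.comp (continuous_id.div_const ε)).continuousOn).mul
          (hz'c.mono hsub)
      · intro t ht
        rw [interior_Icc] at ht
        have hti : t ∈ Ioo (0:ℝ) 1 := hsub ⟨le_of_lt ht.1, le_of_lt ht.2⟩
        have hde : HasDerivAt (fun s : ℝ => Real.exp (s / ε)) (Real.exp (t / ε) * (1 / ε)) t := by
          simpa using ((hasDerivAt_id t).div_const ε).exp
        have hdg : HasDerivAt (fun s => Real.exp (s / ε) * z' s)
            (Real.exp (t / ε) * (1 / ε) * z' t + Real.exp (t / ε) * z'' t) t :=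
          hde.mul (hz'' t hti)
        rw [hdg.deriv]
        have hexp : 0 < Real.exp (t / ε) := Real.exp_pos _
        have hLt := hL t hti
        have key : Real.exp (t/ε) * (1/ε) * z' t < Real.exp (t/ε) * (1/ε) * (-ε * z'' t) :=
          mul_lt_mul_of_pos_left (by linarith) (by positivity)
        have hid : Real.exp (t/ε) * (1/ε) * (-ε * z'' t) = -(Real.exp (t/ε) * z'' t) := by
          field_simp
        linarith [key, hid ▸ key]
    have hgy : Real.exp (y / ε) * z' y < Real.exp (x0 / ε) * z' x0 :=
      hganti (left_mem_Icc.2 (le_of_lt hy.1)) (right_mem_Icc.2 (le_of_lt hy.1)) hy.1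
    rw [hz'x0, mul_zero] at hgy
    nlinarith [Real.exp_pos (y / ε)]
  have hzanti : StrictAntiOn z (Icc x0 1) := by
    apply strictAntiOn_of_deriv_neg (convex_Icc _ _)
      (hc.mono (Icc_subset_Icc (le_of_lt h0lt) le_rfl))
    intro t ht
    rw [interior_Icc] at ht
    have hti : t ∈ Ioo (0:ℝ) 1 := ⟨lt_trans h0lt ht.1, ht.2⟩
    rw [(hz' t hti).deriv]
    exact hneg t ht
  have hlt : z 1 < z x0 :=
    hzanti (left_mem_Icc.2 (le_of_lt h1lt)) (right_mem_Icc.2 (le_of_lt h1lt)) h1lt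
  have := hmin (right_mem_Icc.2 zero_le_one)
  exact absurd this (not_le.2 hlt)

/-- Let `f : [0,1] → ℝ` be continuously differentiable, let
`u⁰(x) = ∫_x^1 f(s) ds` and, for `ε > 0`, let `φ_ε(x) = −u⁰(0)·e^{−x/ε}` be the
boundary-layer corrector.  Then there is a constant `κ > 0`, depending only on `f` and
not on `ε`, such that for every `ε ∈ (0,1]` and every `u : [0,1] → ℝ` twice continuously
differentiable on `[0,1]` solving `−ε u'' − u' = f` on `(0,1)` with `u(0) = u(1) = 0`,
one has `∫_0^1 (u − u⁰ − φ_ε)² dx ≤ κ² ε²`. -/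
theorem corrector_L2_convergence_rate
    (f : ℝ → ℝ) (hf : ContDiffOn ℝ 1 f (Icc 0 1))
    (u0 : ℝ → ℝ) (hu0 : ∀ x, u0 x = ∫ s in x..(1 : ℝ), f s) :
    ∃ κ : ℝ, 0 < κ ∧
      ∀ ε ∈ Ioc (0 : ℝ) 1, ∀ u : ℝ → ℝ,
        ContDiffOn ℝ 2 u (Icc 0 1) →
        (∀ x ∈ Ioo (0 : ℝ) 1, -ε * deriv (deriv u) x - deriv u x = f x) →
        u 0 = 0 → u 1 = 0 →
        (∫ x in (0 : ℝ)..1, (u x - u0 x - (-u0 0 * Real.exp (-x / ε))) ^ 2)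
          ≤ κ ^ 2 * ε ^ 2 := by
  have hfc : ContinuousOn f (Icc 0 1) := hf.continuousOn
  have hfcu : ContinuousOn f (uIcc (0:ℝ) 1) := by
    rw [uIcc_of_le zero_le_one]; exact hfc
  have hfi : IntervalIntegrable f MeasureTheory.volume 0 1 := hfcu.intervalIntegrable
  obtain ⟨M0, hM0⟩ := isCompact_Icc.exists_bound_of_continuousOn
    (hf.continuousOn_derivWithin (uniqueDiffOn_Icc one_pos) le_rfl)
  set M := max M0 0 with hM
  have hMnn : 0 ≤ M := le_max_right _ _
  have hderivf : ∀ x ∈ Ioo (0:ℝ) 1, |deriv f x| ≤ M := by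
    intro x hx
    have h1 : derivWithin f (Icc 0 1) x = deriv f x :=
      derivWithin_of_mem_nhds (Icc_mem_nhds hx.1 hx.2)
    have h2 := hM0 x (Ioo_subset_Icc_self hx)
    rw [h1, Real.norm_eq_abs] at h2
    exact h2.trans (le_max_left _ _)
  set K := M + |u0 0| + 1 with hK
  have hKM : M + 1 ≤ K := by
    rw [hK]; linarith [abs_nonneg (u0 0)]
  have hKu : |u0 0| ≤ K := by rw [hK]; linarith
  have hK1 : 1 ≤ K := by linarith
  refine ⟨2 * K, by linarith, ?_⟩
  rintro ε ⟨hεp, hε1⟩ u hu hueq hub0 hub1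
  have hεne : ε ≠ 0 := ne_of_gt hεp
  -- primitive representation of u0
  have hF : ∀ y ∈ Icc (0:ℝ) 1, u0 y = (∫ s in (0:ℝ)..1, f s) - ∫ s in (0:ℝ)..y, f s := by
    intro y hy
    have hi1 : IntervalIntegrable f MeasureTheory.volume 0 y :=
      hfi.mono_set (by
        rw [uIcc_of_le hy.1, uIcc_of_le zero_le_one]
        exact Icc_subset_Icc le_rfl hy.2)
    have hi2 : IntervalIntegrable f MeasureTheory.volume y 1 :=
      hfi.mono_set (by
        rw [uIcc_of_le hy.2, uIcc_of_le zero_le_one]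
        exact Icc_subset_Icc hy.1 le_rfl)
    have hadd := intervalIntegral.integral_add_adjacent_intervals hi1 hi2
    rw [hu0 y]
    linarith
  have hu0c : ContinuousOn u0 (Icc 0 1) := by
    have h := intervalIntegral.continuousOn_primitive_interval_left
      (μ := MeasureTheory.volume) (f := f) (a := (0:ℝ)) (b := 1)
      (by rw [uIcc_of_le zero_le_one]; exact hfc.integrableOn_Icc)
    rw [uIcc_of_le zero_le_one] at h
    exact h.congr (fun y _ => hu0 y)
  have hu0d : ∀ x ∈ Ioo (0:ℝ) 1, HasDerivAt u0 (-f x) x := by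
    intro x hx
    have hi1 : IntervalIntegrable f MeasureTheory.volume 0 x :=
      hfi.mono_set (by
        rw [uIcc_of_le (le_of_lt hx.1), uIcc_of_le zero_le_one]
        exact Icc_subset_Icc le_rfl (le_of_lt hx.2))
    have hmeas := (hfc.mono Ioo_subset_Icc_self).stronglyMeasurableAtFilter (μ := MeasureTheory.volume) isOpen_Ioo x hx
    have hcont : ContinuousAt f x := hfc.continuousAt (Icc_mem_nhds hx.1 hx.2)
    have hG : HasDerivAt (fun y => ∫ s in (0:ℝ)..y, f s) (f x) x :=
      intervalIntegral.integral_hasDerivAt_right hi1 hmeas hcont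
    have hGF := hG.const_sub (∫ s in (0:ℝ)..1, f s)
    exact hGF.congr_of_eventuallyEq
      (Filter.eventuallyEq_of_mem (Icc_mem_nhds hx.1 hx.2) (fun y hy => hF y hy))
  -- derivatives of u on the interior
  have huIoo : ContDiffOn ℝ 2 u (Ioo 0 1) := hu.mono Ioo_subset_Icc_self
  have hud : ∀ x ∈ Ioo (0:ℝ) 1, HasDerivAt u (deriv u x) x := fun x hx =>
    ((huIoo.differentiableOn (by norm_num)).differentiableAt (isOpen_Ioo.mem_nhds hx)).hasDerivAt
  have hudc1 : ContDiffOn ℝ 1 (deriv u) (Ioo 0 1) := by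
    have h2 : ContDiffOn ℝ (1 + 1 : ℕ) u (Ioo 0 1) := by exact_mod_cast huIoo
    exact ((contDiffOn_succ_iff_deriv_of_isOpen isOpen_Ioo).mp (by exact_mod_cast h2)).2.2
  have hud2 : ∀ x ∈ Ioo (0:ℝ) 1, HasDerivAt (deriv u) (deriv (deriv u) x) x := fun x hx =>
    ((hudc1.differentiableOn one_ne_zero).differentiableAt (isOpen_Ioo.mem_nhds hx)).hasDerivAt
  have hudcc : ContinuousOn (deriv u) (Ioo 0 1) := hudc1.continuousOn
  have hfd : ∀ x ∈ Ioo (0:ℝ) 1, HasDerivAt f (deriv f x) x := fun x hx =>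
    ((hf.differentiableOn one_ne_zero).differentiableAt (Icc_mem_nhds hx.1 hx.2)).hasDerivAt
  -- the exponential corrector
  have hE : ∀ x : ℝ, HasDerivAt (fun y => Real.exp (-y / ε)) (Real.exp (-x / ε) * (-1 / ε)) x := by
    intro x
    have h1 : HasDerivAt (fun y : ℝ => -y / ε) (-1 / ε) x := by
      simpa using ((hasDerivAt_id x).neg.div_const ε)
    exact h1.exp
  have hEc : Continuous (fun y : ℝ => Real.exp (-y / ε)) :=
    Real.continuous_exp.comp ((continuous_id.neg).div_const ε)
  -- w = u - u0 - φ and its derivatives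
  have hwd : ∀ x ∈ Ioo (0:ℝ) 1,
      HasDerivAt (fun x => u x - u0 x - (-u0 0 * Real.exp (-x / ε)))
        (deriv u x - (-f x) - (-u0 0 * (Real.exp (-x / ε) * (-1 / ε)))) x := fun x hx =>
    ((hud x hx).sub (hu0d x hx)).sub ((hE x).const_mul (-u0 0))
  have hw'd : ∀ x ∈ Ioo (0:ℝ) 1,
      HasDerivAt (fun x => deriv u x - (-f x) - (-u0 0 * (Real.exp (-x / ε) * (-1 / ε))))
        (deriv (deriv u) x - (-(deriv f x)) -
          (-u0 0 * (Real.exp (-x / ε) * (-1 / ε) * (-1 / ε)))) x := fun x hx =>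
    ((hud2 x hx).sub ((hfd x hx).neg)).sub (((hE x).mul_const (-1 / ε)).const_mul (-u0 0))
  have hwc : ContinuousOn (fun x => u x - u0 x - (-u0 0 * Real.exp (-x / ε))) (Icc 0 1) :=
    (hu.continuousOn.sub hu0c).sub ((continuous_const.mul hEc).continuousOn)
  have hw'c : ContinuousOn
      (fun x => deriv u x - (-f x) - (-u0 0 * (Real.exp (-x / ε) * (-1 / ε)))) (Ioo 0 1) :=
    (hudcc.sub ((hfc.mono Ioo_subset_Icc_self).neg)).sub
      ((continuous_const.mul (hEc.mul continuous_const)).continuousOn)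
  -- the corrector is annihilated by the operator
  have hφ : ∀ x : ℝ,
      -ε * (-u0 0 * (Real.exp (-x / ε) * (-1 / ε) * (-1 / ε)))
        - (-u0 0 * (Real.exp (-x / ε) * (-1 / ε))) = 0 := by
    intro x; field_simp; ring
  -- the equation satisfied by w
  have hLw : ∀ x ∈ Ioo (0:ℝ) 1,
      -ε * (deriv (deriv u) x - (-(deriv f x)) -
          (-u0 0 * (Real.exp (-x / ε) * (-1 / ε) * (-1 / ε))))
        - (deriv u x - (-f x) - (-u0 0 * (Real.exp (-x / ε) * (-1 / ε))))
        = -ε * deriv f x := by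
    intro x hx
    have h := hueq x hx
    linear_combination h - hφ x
  -- boundary values of w
  have hw0 : u 0 - u0 0 - (-u0 0 * Real.exp (-(0:ℝ) / ε)) = 0 := by
    simp [hub0]
  have hu01 : u0 1 = 0 := by rw [hu0 1, intervalIntegral.integral_same]
  have hw1 : u 1 - u0 1 - (-u0 0 * Real.exp (-(1:ℝ) / ε)) = u0 0 * Real.exp (-1 / ε) := by
    rw [hub1, hu01]; ring
  have hexpb : Real.exp (-1 / ε) ≤ ε := by
    have h1 : Real.log (1 / ε) ≤ 1 / ε - 1 := Real.log_le_sub_one_of_pos (by positivity)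
    have h2 : Real.log (1 / ε) = -Real.log ε := by rw [one_div, Real.log_inv]
    have h3 : -1 / ε ≤ Real.log ε := by
      rw [neg_div]; linarith
    calc Real.exp (-1 / ε) ≤ Real.exp (Real.log ε) := Real.exp_le_exp.2 h3
      _ = ε := Real.exp_log hεp
  have hw1b : |u0 0 * Real.exp (-1 / ε)| ≤ |u0 0| * ε := by
    rw [abs_mul, Real.abs_exp]
    exact mul_le_mul_of_nonneg_left hexpb (abs_nonneg _)
  -- the barrier argument
  have key : ∀ σ : ℝ, |σ| = 1 → ∀ x ∈ Icc (0:ℝ) 1,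
      0 ≤ K * ε * (2 - x) + σ * (u x - u0 x - (-u0 0 * Real.exp (-x / ε))) := by
    intro σ hσ
    apply corrector_max_principle ε hεp _
      (fun x => K * ε * -1 + σ * (deriv u x - (-f x) - (-u0 0 * (Real.exp (-x / ε) * (-1 / ε)))))
      (fun x => 0 + σ * (deriv (deriv u) x - (-(deriv f x)) -
          (-u0 0 * (Real.exp (-x / ε) * (-1 / ε) * (-1 / ε)))))
    · exact ((continuous_const.mul (continuous_const.sub continuous_id)).continuousOn).add
        (continuousOn_const.mul hwc)
    · intro x hx
      exact (((hasDerivAt_id x).const_sub 2).const_mul (K * ε)).add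
        ((hwd x hx).const_mul σ)
    · intro x hx
      exact (hasDerivAt_const x (K * ε * -1)).add ((hw'd x hx).const_mul σ)
    · exact continuousOn_const.add (continuousOn_const.mul hw'c)
    · intro x hx
      have hid : -ε * (0 + σ * (deriv (deriv u) x - (-(deriv f x)) -
            (-u0 0 * (Real.exp (-x / ε) * (-1 / ε) * (-1 / ε)))))
          - (K * ε * -1 + σ * (deriv u x - (-f x) -
            (-u0 0 * (Real.exp (-x / ε) * (-1 / ε)))))
          = K * ε + σ * (-ε * deriv f x) := by
        linear_combination σ * hLw x hx
      rw [hid]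
      have hB := hderivf x hx
      have habs : |σ * (-ε * deriv f x)| ≤ ε * M := by
        rw [abs_mul, hσ, one_mul, abs_mul, abs_neg, abs_of_pos hεp]
        exact mul_le_mul_of_nonneg_left hB (le_of_lt hεp)
      have h2 := (abs_le.mp habs).1
      nlinarith [mul_pos hεp (show (0:ℝ) < K - M by linarith)]
    · rw [hw0, mul_zero, add_zero, sub_zero]
      nlinarith
    · rw [hw1]
      have h2 := (abs_le.mp hw1b).1
      have h3 := neg_abs_le (σ * (u0 0 * Real.exp (-1 / ε)))
      rw [abs_mul, hσ, one_mul] at h3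
      have h4 : |u0 0| * ε ≤ K * ε := mul_le_mul_of_nonneg_right hKu (le_of_lt hεp)
      nlinarith
  -- pointwise bound
  have hbound : ∀ x ∈ Icc (0:ℝ) 1,
      |u x - u0 x - (-u0 0 * Real.exp (-x / ε))| ≤ 2 * K * ε := by
    intro x hx
    have k1 := key 1 (by norm_num) x hx
    have k2 := key (-1) (by norm_num) x hx
    have hx2 : 2 - x ≤ 2 := by linarith [hx.1]
    have hKε : 0 ≤ K * ε := mul_nonneg (by linarith) (le_of_lt hεp)
    have hm := mul_le_mul_of_nonneg_left hx2 hKε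
    rw [abs_le]
    constructor <;> nlinarith
  -- conclude via monotonicity of the integral
  have hintw : IntervalIntegrable
      (fun x => (u x - u0 x - (-u0 0 * Real.exp (-x / ε))) ^ 2) MeasureTheory.volume 0 1 := by
    apply ContinuousOn.intervalIntegrable
    rw [uIcc_of_le zero_le_one]
    exact hwc.pow 2
  calc (∫ x in (0:ℝ)..1, (u x - u0 x - (-u0 0 * Real.exp (-x / ε))) ^ 2)
      ≤ ∫ _x in (0:ℝ)..1, (2 * K * ε) ^ 2 := by
        apply intervalIntegral.integral_mono_on zero_le_one hintw intervalIntegrable_const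
        intro x hx
        have h2 := abs_le.mp (hbound x hx)
        exact sq_le_sq' h2.1 h2.2
    _ = (2 * K * ε) ^ 2 := by simp
    _ = (2 * K) ^ 2 * ε ^ 2 := by ring
end

section
/- Let f : [0,1] → ℝ be continuously differentiable and define u⁰(x) = ∫_x^1 f(s) ds. Then there exists a constant κ > 0, depending only on f and not on ε, such that for every ε ∈ (0, 1] and every function u : [0,1] → ℝ that is twice continuously differentiable on [0,1] and satisfies −ε u''(x) − u'(x) = f(x) for all x ∈ (0,1) together with u(0) = u(1) = 0, one has the L² convergence estimate ∫_0^1 (u(x) − u⁰(x))² dx ≤ κ² ε; that is, the diffusive solution converges to the limit solution in L²(0,1) at rate ε^{1/2}. -/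
open Set intervalIntegral

/-- Maximum principle for `-ε φ'' - φ' > 0` on `(0,1)`. -/
theorem mp_aux (ε : ℝ) (hε : 0 < ε) (φ φ' φ'' : ℝ → ℝ)
    (hc : ContinuousOn φ (Icc 0 1))
    (hd1 : ∀ x ∈ Ioo (0:ℝ) 1, HasDerivAt φ (φ' x) x)
    (hd2 : ∀ x ∈ Ioo (0:ℝ) 1, HasDerivAt φ' (φ'' x) x)
    (hL : ∀ x ∈ Ioo (0:ℝ) 1, ε * φ'' x + φ' x < 0)
    (h0 : 0 ≤ φ 0) (h1 : 0 ≤ φ 1) : ∀ x ∈ Icc (0:ℝ) 1, 0 ≤ φ x := by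
  set h : ℝ → ℝ := fun x => Real.exp (x/ε) * φ' x with hh
  have hh' : ∀ x ∈ Ioo (0:ℝ) 1,
      HasDerivAt h (Real.exp (x/ε) * (1/ε) * φ' x + Real.exp (x/ε) * φ'' x) x := by
    intro x hx
    have he : HasDerivAt (fun y : ℝ => Real.exp (y/ε)) (Real.exp (x/ε) * (1/ε)) x := by
      have h1 : HasDerivAt (fun y : ℝ => y/ε) (1/ε) x := by
        simpa using (hasDerivAt_id x).div_const ε
      exact (Real.hasDerivAt_exp (x/ε)).comp x h1
    exact he.mul (hd2 x hx)
  have hanti : AntitoneOn h (Ioo 0 1) := by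
    apply antitoneOn_of_deriv_nonpos (convex_Ioo 0 1)
    · exact fun x hx => ((hh' x hx).continuousAt).continuousWithinAt
    · rw [interior_Ioo]; exact fun x hx => (hh' x hx).differentiableAt.differentiableWithinAt
    · rw [interior_Ioo]
      intro x hx
      rw [(hh' x hx).deriv]
      have key : Real.exp (x/ε) * (1/ε) * φ' x + Real.exp (x/ε) * φ'' x
          = (Real.exp (x/ε) * (ε * φ'' x + φ' x)) / ε := by
        field_simp; ring
      rw [key]
      exact div_nonpos_of_nonpos_of_nonneg
        (mul_nonpos_of_nonneg_of_nonpos (Real.exp_pos _).le (hL x hx).le) hε.le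
  intro x hx
  rcases eq_or_lt_of_le hx.1 with he|h0x
  · exact he ▸ h0
  rcases eq_or_lt_of_le hx.2 with he|hx1
  · exact he ▸ h1
  have hxI : x ∈ Ioo (0:ℝ) 1 := ⟨h0x, hx1⟩
  by_cases hsign : 0 ≤ φ' x
  · have hmono : MonotoneOn φ (Icc 0 x) := by
      apply monotoneOn_of_deriv_nonneg (convex_Icc 0 x)
      · exact hc.mono (Icc_subset_Icc le_rfl hx.2)
      · rw [interior_Icc]
        exact fun y hy =>
          (hd1 y ⟨hy.1, hy.2.trans hx1⟩).differentiableAt.differentiableWithinAt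
      · rw [interior_Icc]
        intro y hy
        have hyI : y ∈ Ioo (0:ℝ) 1 := ⟨hy.1, hy.2.trans hx1⟩
        rw [(hd1 y hyI).deriv]
        have hle : h x ≤ h y := hanti hyI hxI hy.2.le
        have hx0 : 0 ≤ h x := mul_nonneg (Real.exp_pos _).le hsign
        have hy0 : 0 ≤ Real.exp (y/ε) * φ' y := le_trans hx0 hle
        nlinarith [Real.exp_pos (y/ε)]
    have := hmono (left_mem_Icc.mpr h0x.le) (right_mem_Icc.mpr h0x.le) h0x.le
    linarith
  · push_neg at hsign
    have hantiφ : AntitoneOn φ (Icc x 1) := by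
      apply antitoneOn_of_deriv_nonpos (convex_Icc x 1)
      · exact hc.mono (Icc_subset_Icc hx.1 le_rfl)
      · rw [interior_Icc]
        exact fun y hy =>
          (hd1 y ⟨h0x.trans hy.1, hy.2⟩).differentiableAt.differentiableWithinAt
      · rw [interior_Icc]
        intro y hy
        have hyI : y ∈ Ioo (0:ℝ) 1 := ⟨h0x.trans hy.1, hy.2⟩
        rw [(hd1 y hyI).deriv]
        have hle : h y ≤ h x := hanti hxI hyI hy.1.le
        have hx0 : h x < 0 := mul_neg_of_pos_of_neg (Real.exp_pos _) hsign
        have hy0 : Real.exp (y/ε) * φ' y < 0 := lt_of_le_of_lt hle hx0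
        nlinarith [Real.exp_pos (y/ε)]
    have := hantiφ (left_mem_Icc.mpr hx1.le) (right_mem_Icc.mpr hx1.le) hx1.le
    linarith

theorem pt_aux (A c e t : ℝ) (ht : (1-t)^2 ≤ 1) :
    (A*e + c*(1-t))^2 ≤ 2*A^2*e^2 + 2*c^2 := by
  nlinarith [sq_nonneg (A*e - c*(1-t)), mul_le_mul_of_nonneg_left ht (sq_nonneg c), sq_nonneg c]

theorem final_aux (a M ε E : ℝ) (hε0 : 0 < ε) (hε1 : ε ≤ 1) (hE : 0 ≤ E) :
    ((a^2 * -ε) * E + 2*ε^2*M^2*1) - ((a^2 * -ε) * 1 + 2*ε^2*M^2*0) ≤ (a^2 + 2*M^2) * ε := by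
  nlinarith [mul_nonneg (mul_nonneg (sq_nonneg a) hε0.le) hE,
    mul_le_mul_of_nonneg_left hε1 (mul_nonneg (sq_nonneg M) hε0.le)]

/-- Let `f : [0,1] → ℝ` be continuously differentiable and
`u⁰(x) = ∫_x^1 f(s) ds`.  Then there is a constant `κ > 0`, depending only on `f` and not
on `ε`, such that for every `ε ∈ (0,1]` and every `u : [0,1] → ℝ` twice continuously
differentiable on `[0,1]` solving `−ε u'' − u' = f` on `(0,1)` with `u(0) = u(1) = 0`,
one has `∫_0^1 (u − u⁰)² dx ≤ κ² ε`; i.e. the diffusive solution converges to the limit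
solution in `L²(0,1)` at rate `ε^{1/2}`. -/
theorem diffusive_L2_convergence_rate
    (f : ℝ → ℝ) (hf : ContDiffOn ℝ 1 f (Icc 0 1))
    (u0 : ℝ → ℝ) (hu0 : ∀ x, u0 x = ∫ s in x..(1 : ℝ), f s) :
    ∃ κ : ℝ, 0 < κ ∧
      ∀ ε ∈ Ioc (0 : ℝ) 1, ∀ u : ℝ → ℝ,
        ContDiffOn ℝ 2 u (Icc 0 1) →
        (∀ x ∈ Ioo (0 : ℝ) 1, -ε * deriv (deriv u) x - deriv u x = f x) →
        u 0 = 0 → u 1 = 0 →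
        (∫ x in (0 : ℝ)..1, (u x - u0 x) ^ 2) ≤ κ ^ 2 * ε := by
  have hfc : ContinuousOn f (Icc 0 1) := hf.continuousOn
  have hder : ContinuousOn (derivWithin f (Icc 0 1)) (Icc 0 1) :=
    hf.continuousOn_derivWithin (uniqueDiffOn_Icc one_pos) le_rfl
  obtain ⟨C, hC⟩ := isCompact_Icc.exists_bound_of_continuousOn hder
  have hC0 : 0 ≤ C := le_trans (norm_nonneg _) (hC 0 (by norm_num))
  set M : ℝ := C + 1 with hMdef
  clear_value M
  have hM1 : (1:ℝ) ≤ M := by simp [hMdef]; linarith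
  have hfd : ∀ x ∈ Ioo (0:ℝ) 1, |deriv f x| ≤ C := by
    intro x hx
    have hmem : Icc (0:ℝ) 1 ∈ nhds x := Icc_mem_nhds hx.1 hx.2
    have heq : deriv f x = derivWithin f (Icc 0 1) x := (derivWithin_of_mem_nhds hmem).symm
    rw [heq]
    simpa using hC x (Ioo_subset_Icc_self hx)
  set a : ℝ := ∫ s in (0:ℝ)..1, f s with hadef
  clear_value a
  refine ⟨Real.sqrt (a^2 + 2*M^2), Real.sqrt_pos.mpr (by nlinarith), ?_⟩
  have hκ2 : Real.sqrt (a^2 + 2*M^2) ^ 2 = a^2 + 2*M^2 := Real.sq_sqrt (by nlinarith)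
  intro ε hε u hu hode hub0 hub1
  obtain ⟨hε0, hε1⟩ := hε
  have hεne : ε ≠ 0 := ne_of_gt hε0
  rw [hκ2]
  -- interval integrability of f on subintervals
  have hfInt : ∀ x ∈ Icc (0:ℝ) 1, IntervalIntegrable f MeasureTheory.volume x 1 := by
    intro x hx
    apply ContinuousOn.intervalIntegrable
    apply hfc.mono
    rw [uIcc_of_le hx.2]
    exact Icc_subset_Icc hx.1 le_rfl
  -- continuity of u0 on [0,1]
  have hu0fun : u0 = fun x => ∫ s in x..(1:ℝ), f s := funext hu0
  have hu0cont : ContinuousOn u0 (Icc 0 1) := by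
    rw [hu0fun]
    have hI : MeasureTheory.IntegrableOn f (uIcc (0:ℝ) 1) MeasureTheory.volume := by
      rw [uIcc_of_le (by norm_num : (0:ℝ) ≤ 1)]
      exact hfc.integrableOn_Icc
    have := intervalIntegral.continuousOn_primitive_interval_left hI
    rwa [uIcc_of_le (by norm_num : (0:ℝ) ≤ 1)] at this
  -- u0 values at endpoints
  have hu0_0 : u0 0 = a := by rw [hadef]; exact hu0 0
  have hu0_1 : u0 1 = 0 := by rw [hu0]; exact intervalIntegral.integral_same
  -- derivative of u0
  have hu0d : ∀ x ∈ Ioo (0:ℝ) 1, HasDerivAt u0 (-f x) x := by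
    intro x hx
    rw [hu0fun]
    exact intervalIntegral.integral_hasDerivAt_left (hfInt x (Ioo_subset_Icc_self hx))
      (ContinuousOn.stronglyMeasurableAtFilter isOpen_Ioo (hfc.mono Ioo_subset_Icc_self) x hx)
      (hfc.continuousAt (Icc_mem_nhds hx.1 hx.2))
  -- derivative facts for u and f
  have huD : DifferentiableOn ℝ u (Icc 0 1) := hu.differentiableOn (by norm_num)
  have hu1d : ∀ x ∈ Ioo (0:ℝ) 1, HasDerivAt u (deriv u x) x := fun x hx =>
    (huD.differentiableAt (Icc_mem_nhds hx.1 hx.2)).hasDerivAt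
  have hu2d : ∀ x ∈ Ioo (0:ℝ) 1, HasDerivAt (deriv u) (deriv (deriv u) x) x := by
    have h2 : ContDiffOn ℝ 1 (deriv u) (Ioo 0 1) :=
      (hu.mono Ioo_subset_Icc_self).deriv_of_isOpen isOpen_Ioo (by norm_num)
    intro x hx
    exact ((h2.differentiableOn one_ne_zero).differentiableAt (isOpen_Ioo.mem_nhds hx)).hasDerivAt
  have hfd' : ∀ x ∈ Ioo (0:ℝ) 1, HasDerivAt f (deriv f x) x := fun x hx =>
    ((hf.differentiableOn one_ne_zero).differentiableAt (Icc_mem_nhds hx.1 hx.2)).hasDerivAt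
  -- barrier function
  set A : ℝ := |a| with hAdef
  have hA0 : 0 ≤ A := abs_nonneg a
  set ψ : ℝ → ℝ := fun x => A * Real.exp (-(x/ε)) + ε*M*(1-x) with hψdef
  set ψ' : ℝ → ℝ := fun x => -(A/ε) * Real.exp (-(x/ε)) - ε*M with hψ'def
  set ψ'' : ℝ → ℝ := fun x => A/ε^2 * Real.exp (-(x/ε)) with hψ''def
  clear_value A ψ ψ' ψ''
  have hexp : ∀ x : ℝ, HasDerivAt (fun y => Real.exp (-(y/ε))) (Real.exp (-(x/ε)) * (-(1/ε))) x := by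
    intro x
    have h1 : HasDerivAt (fun y : ℝ => -(y/ε)) (-(1/ε)) x := by
      exact ((hasDerivAt_id x).div_const ε).neg
    exact (Real.hasDerivAt_exp (-(x/ε))).comp x h1
  have hψ1 : ∀ x, HasDerivAt ψ (ψ' x) x := by
    intro x
    have hlin : HasDerivAt (fun y : ℝ => ε*M*(1-y)) (-(ε*M)) x := by
      have := ((hasDerivAt_const x (1:ℝ)).sub (hasDerivAt_id x)).const_mul (ε*M)
      simpa using this
    have := ((hexp x).const_mul A).add hlin
    rw [hψdef]
    refine this.congr_deriv ?_
    rw [hψ'def]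
    field_simp
    ring
  have hψ2 : ∀ x, HasDerivAt ψ' (ψ'' x) x := by
    intro x
    have := ((hexp x).const_mul (-(A/ε))).sub_const (ε*M)
    rw [hψ'def]
    refine this.congr_deriv ?_
    rw [hψ''def]
    field_simp
  have hψid : ∀ x, ε * ψ'' x + ψ' x = -(ε*M) := by
    intro x
    rw [hψ'def, hψ''def]
    field_simp
    ring
  have hψcont : ContinuousOn ψ (Icc 0 1) := by
    rw [hψdef]
    exact Continuous.continuousOn (by fun_prop)
  -- ODE identity for v = u - u0 :  ε v'' + v' = ε f'
  have hvode : ∀ x ∈ Ioo (0:ℝ) 1,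
      ε * (deriv (deriv u) x + deriv f x) + (deriv u x + f x) = ε * deriv f x := by
    intro x hx
    have := hode x hx
    ring_nf
    ring_nf at this
    linarith
  -- apply the maximum principle with both signs
  have hcomp : ∀ σ : ℝ, σ = 1 ∨ σ = -1 →
      ∀ x ∈ Icc (0:ℝ) 1, 0 ≤ ψ x + σ * (u x - u0 x) := by
    intro σ hσ
    apply mp_aux ε hε0 _ (fun x => ψ' x + σ * (deriv u x + f x))
      (fun x => ψ'' x + σ * (deriv (deriv u) x + deriv f x))
    · exact hψcont.add ((hu.continuousOn.sub hu0cont).const_smul σ : )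
    · intro x hx
      have hv : HasDerivAt (fun y => u y - u0 y) (deriv u x + f x) x := by
        exact ((hu1d x hx).sub (hu0d x hx)).congr_deriv (sub_neg_eq_add _ _)
      exact (hψ1 x).add (hv.const_mul σ)
    · intro x hx
      exact (hψ2 x).add (((hu2d x hx).add (hfd' x hx)).const_mul σ)
    · intro x hx
      have h1 := hψid x
      have h2 := hvode x hx
      have h3 := hfd x hx
      have h4 := abs_le.mp h3
      rcases hσ with h|h <;> subst h <;> nlinarith [mul_le_mul_of_nonneg_left h4.2 hε0.le,
        mul_le_mul_of_nonneg_left h4.1 hε0.le]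
    · have : ψ 0 = A + ε*M := by simp [hψdef]
      have hAa := le_abs_self a
      have hAa' := neg_abs_le a
      rcases hσ with h|h <;> subst h <;>
        simp [this, hub0, hu0_0] <;> nlinarith [mul_pos hε0 (lt_of_lt_of_le one_pos hM1)]
    · have : ψ 1 = A * Real.exp (-(1/ε)) := by simp [hψdef]
      rcases hσ with h|h <;> subst h <;>
        simp [this, hub1, hu0_1] <;> positivity
  have habs : ∀ x ∈ Icc (0:ℝ) 1, (u x - u0 x)^2 ≤ ψ x ^ 2 := by
    intro x hx
    have h1 := hcomp 1 (Or.inl rfl) x hx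
    have h2 := hcomp (-1) (Or.inr rfl) x hx
    nlinarith
  -- integrate
  have hψ2cont : Continuous (fun x => ψ x ^ 2) := by
    rw [hψdef]; fun_prop
  have hvint : IntervalIntegrable (fun x => (u x - u0 x)^2) MeasureTheory.volume 0 1 := by
    apply ContinuousOn.intervalIntegrable
    rw [uIcc_of_le (by norm_num : (0:ℝ) ≤ 1)]
    exact (hu.continuousOn.sub hu0cont).pow 2
  have step1 : (∫ x in (0:ℝ)..1, (u x - u0 x) ^ 2) ≤ ∫ x in (0:ℝ)..1, ψ x ^ 2 := by
    apply intervalIntegral.integral_mono_on (by norm_num) hvint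
      (hψ2cont.intervalIntegrable 0 1)
    intro x hx
    exact habs x hx
  -- bound ψ² pointwise
  have hpt : ∀ x ∈ Icc (0:ℝ) 1,
      ψ x ^ 2 ≤ 2*a^2 * (Real.exp (-(x/ε)))^2 + 2*ε^2*M^2 := by
    intro x hx
    have h1x : (1-x)^2 ≤ 1 := by nlinarith [hx.1, hx.2]
    have hA2 : A^2 = a^2 := by rw [hAdef]; exact sq_abs a
    have hψx : ψ x = A * Real.exp (-(x/ε)) + ε*M*(1-x) := by rw [hψdef]
    rw [hψx, ← hA2]
    have key := pt_aux A (ε*M) (Real.exp (-(x/ε))) x h1x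
    have h3 : 2*(ε*M)^2 = 2*ε^2*M^2 := by ring
    linarith [key, h3]
  have hgcont : Continuous (fun x : ℝ => 2*a^2 * (Real.exp (-(x/ε)))^2 + 2*ε^2*M^2) := by
    fun_prop
  have step2 : (∫ x in (0:ℝ)..1, ψ x ^ 2)
      ≤ ∫ x in (0:ℝ)..1, (2*a^2 * (Real.exp (-(x/ε)))^2 + 2*ε^2*M^2) := by
    exact intervalIntegral.integral_mono_on (by norm_num) (hψ2cont.intervalIntegrable 0 1)
      (hgcont.intervalIntegrable 0 1) hpt
  -- compute the integral explicitly
  have hG : ∀ x : ℝ, HasDerivAt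
      (fun y => (a^2 * -ε) * (Real.exp (-(y/ε)))^2 + 2*ε^2*M^2*y)
      (2*a^2 * (Real.exp (-(x/ε)))^2 + 2*ε^2*M^2) x := by
    intro x
    have h1 : HasDerivAt (fun y => (Real.exp (-(y/ε)))^2)
        (2 * Real.exp (-(x/ε)) * (Real.exp (-(x/ε)) * (-(1/ε)))) x := by
      have := (hexp x).pow 2
      refine this.congr_deriv ?_
      norm_num
    have h2 : HasDerivAt (fun y : ℝ => 2*ε^2*M^2*y) (2*ε^2*M^2) x := by
      simpa using (hasDerivAt_id x).const_mul (2*ε^2*M^2)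
    have := (h1.const_mul (a^2 * -ε)).add h2
    refine this.congr_deriv ?_
    field_simp
  have step3 : (∫ x in (0:ℝ)..1, (2*a^2 * (Real.exp (-(x/ε)))^2 + 2*ε^2*M^2))
      = ((a^2 * -ε) * (Real.exp (-(1/ε)))^2 + 2*ε^2*M^2*1)
        - ((a^2 * -ε) * (Real.exp (-(0/ε)))^2 + 2*ε^2*M^2*0) := by
    apply intervalIntegral.integral_eq_sub_of_hasDerivAt (fun x _ => hG x)
    exact Continuous.intervalIntegrable (by fun_prop) 0 1
  have hfinal : ((a^2 * -ε) * (Real.exp (-(1/ε)))^2 + 2*ε^2*M^2*1)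
      - ((a^2 * -ε) * (Real.exp (-(0/ε)))^2 + 2*ε^2*M^2*0) ≤ (a^2 + 2*M^2) * ε := by
    have h0 : Real.exp (-(0/ε)) = 1 := by norm_num
    rw [h0]
    have h1 : ((1:ℝ))^2 = 1 := one_pow 2
    rw [h1]
    exact final_aux a M ε ((Real.exp (-(1/ε)))^2) hε0 hε1 (sq_nonneg _)
  rw [← step3] at hfinal
  linarith [step1, step2, hfinal]
end
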